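/- The number of group automorphisms of the abelian group Z_2^γ × Z_4^δ equals 2^{δ²+γδ+δ(δ-1)/2} · ∏_{j=1}^{δ}(2^j - 1) · 2^{δγ+γ(γ-1)/2} · ∏_{i=1}^{γ}(2^i - 1). -/

import Mathlib

namespace Stmt18Aux
open Matrix

abbrev R2 := ZMod 2
abbrev R4 := ZMod 4

def π : R4 →+* R2 := ZMod.castHom (by norm_num : (2:ℕ) ∣ 4) R2

def ι : R2 →+ R4 where
  toFun a := 2 * (a.val : R4)
  map_zero' := by decide
  map_add' := by decide

def half (v : R4) : R2 := ((v.val / 2 : ℕ) : R2)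

lemma half_ι : ∀ a : R2, half (ι a) = a := by decide
lemma ι_half : ∀ v : R4, 2 * v = 0 → ι (half v) = v := by decide
lemma π_ι : ∀ a : R2, π (ι a) = 0 := by decide
lemma ι_eq_zero : ∀ a : R2, ι a = 0 → a = 0 := by decide
lemma two_mul_ι : ∀ a : R2, 2 * ι a = 0 := by decide
lemma unit_of_π : ∀ v : R4, IsUnit (π v) → IsUnit v := by
  intro v h
  exact IsUnit.of_mul_eq_one (a := v) v (by revert h; revert v; decide)
lemma val_mul_R2 : ∀ a b : R2, ((a.val : ℕ) : R2) * b = b * a := by decide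
lemma val_mul_R4 : ∀ c d : R4, ((c.val : ℕ) : R4) * d = d * c := by decide
lemma val_mul_R4R2 : ∀ (c : R4) (b : R2), ((c.val : ℕ) : R2) * b = b * π c := by decide
lemma val_smul_tor : ∀ (v : R4) (a : R2), 2 * v = 0 → ((a.val : ℕ) : R4) * v = ι (half v * a) := by
  decide
lemma mul_ι : ∀ (d : R4) (a : R2), d * ι a = ι (π d * a) := by decide
lemma pi_zero_of_two_mul : ∀ v : R4, 2 * v = 0 → π v = 0 := by decide
lemma σ_spec : ∀ a b : R2, π ((a.val : R4) + 2 * (b.val : R4)) = a ∧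
    half ((a.val : R4) + 2 * (b.val : R4)) = b := by decide
lemma σ_π_half : ∀ v : R4, ((π v).val : R4) + 2 * ((half v).val : R4) = v := by decide

variable {γ δ : ℕ}

abbrev G (γ δ : ℕ) := (Fin γ → R2) × (Fin δ → R4)
abbrev M2 (a b : ℕ) := Matrix (Fin a) (Fin b) R2
abbrev M4 (n : ℕ) := Matrix (Fin n) (Fin n) R4

def fwd (A : M2 γ γ) (B : M2 γ δ) (C : M2 δ γ) (D : M4 δ) (p : G γ δ) : G γ δ :=
  (A *ᵥ p.1 + B *ᵥ (fun j => π (p.2 j)),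
   (fun i => ι ((C *ᵥ p.1) i)) + D *ᵥ p.2)

variable {A : M2 γ γ} {B : M2 γ δ} {C : M2 δ γ} {D : M4 δ}

lemma fwd_add (p q : G γ δ) :
    fwd A B C D (p + q) = fwd A B C D p + fwd A B C D q := by
  have h2 : (fun j => π ((p + q).2 j)) = (fun j => π (p.2 j)) + (fun j => π (q.2 j)) := by
    funext j; simp
  refine Prod.ext ?_ ?_
  · show A *ᵥ ((p + q).1) + B *ᵥ (fun j => π ((p + q).2 j)) = _
    rw [h2, Prod.fst_add, Matrix.mulVec_add, Matrix.mulVec_add]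
    show _ = (A *ᵥ p.1 + B *ᵥ _) + (A *ᵥ q.1 + B *ᵥ _)
    abel
  · show (fun i => ι ((C *ᵥ ((p + q).1)) i)) + D *ᵥ ((p + q).2) = _
    rw [Prod.fst_add, Prod.snd_add, Matrix.mulVec_add, Matrix.mulVec_add]
    funext i
    show ι ((C *ᵥ p.1 + C *ᵥ q.1) i) + (D *ᵥ p.2 + D *ᵥ q.2) i =
      (ι ((C *ᵥ p.1) i) + (D *ᵥ p.2) i) + (ι ((C *ᵥ q.1) i) + (D *ᵥ q.2) i)
    rw [Pi.add_apply, Pi.add_apply, map_add]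
    abel

lemma fwd_zero : fwd A B C D 0 = 0 := by
  refine Prod.ext ?_ ?_
  · show A *ᵥ 0 + B *ᵥ (fun j => π 0) = 0
    have : (fun _ : Fin δ => π 0) = (0 : Fin δ → R2) := by funext j; simp
    rw [this]; simp
  · show (fun i => ι ((C *ᵥ 0) i)) + D *ᵥ 0 = 0
    have : (fun i : Fin δ => ι ((C *ᵥ (0 : Fin γ → R2)) i)) = (0 : Fin δ → R4) := by
      funext i; simp
    rw [this]; simp

def fwdHom (A : M2 γ γ) (B : M2 γ δ) (C : M2 δ γ) (D : M4 δ) : G γ δ →+ G γ δ where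
  toFun := fwd A B C D
  map_zero' := fwd_zero
  map_add' := fwd_add

lemma mulVec_inj4 {n : ℕ} {M : M4 n} (h : IsUnit M) : Function.Injective (M.mulVec) := by
  letI := h.invertible
  intro u v huv
  have := congrArg (fun w => (⅟M) *ᵥ w) huv
  simpa [Matrix.mulVec_mulVec] using this

lemma mulVec_inj2 {a : ℕ} {M : M2 a a} (h : IsUnit M) : Function.Injective (M.mulVec) := by
  letI := h.invertible
  intro u v huv
  have := congrArg (fun w => (⅟M) *ᵥ w) huv
  simpa [Matrix.mulVec_mulVec] using this

lemma fwd_injective (hA : IsUnit A) (hD : IsUnit D) :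
    Function.Injective (fwdHom A B C D) := by
  rw [injective_iff_map_eq_zero]
  rintro ⟨x, y⟩ h
  have h1 : A *ᵥ x + B *ᵥ (fun j => π (y j)) = 0 := congrArg Prod.fst h
  have h2 : ∀ i, ι ((C *ᵥ x) i) + (D *ᵥ y) i = 0 := fun i =>
    congrFun (congrArg Prod.snd h) i
  have h3 : D *ᵥ ((2 : R4) • y) = 0 := by
    rw [Matrix.mulVec_smul]
    funext i
    have := congrArg (fun t => 2 * t) (h2 i)
    simp only [mul_add, two_mul_ι, zero_add, mul_zero] at this
    simpa [smul_eq_mul] using this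
  have hy2 : (2 : R4) • y = 0 := mulVec_inj4 hD (by simpa using h3)
  have hπy : (fun j => π (y j)) = (0 : Fin δ → R2) := by
    funext j
    exact pi_zero_of_two_mul _ (by simpa [smul_eq_mul] using congrFun hy2 j)
  have hx : x = 0 := by
    apply mulVec_inj2 hA
    rw [hπy] at h1
    simpa using h1
  have hy : y = 0 := by
    apply mulVec_inj4 hD
    subst hx
    funext i
    have := h2 i
    simpa using this
  simp [hx, hy]

lemma cast_val_R2 : ∀ a : R2, ((a.val : ℕ) : R2) = a := by decide
lemma cast_val_R4 : ∀ c : R4, ((c.val : ℕ) : R4) = c := by decide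
lemma add_self_R2 : ∀ a : R2, a + a = 0 := by decide

lemma single_eq_nsmul2 {n : ℕ} (j : Fin n) (c : R2) :
    Pi.single j c = ((c.val : ℕ) • Pi.single j (1:R2) : Fin n → R2) := by
  rw [← Pi.single_smul, nsmul_eq_mul, mul_one, cast_val_R2]

lemma single_eq_nsmul4 {n : ℕ} (j : Fin n) (c : R4) :
    Pi.single j c = ((c.val : ℕ) • Pi.single j (1:R4) : Fin n → R4) := by
  rw [← Pi.single_smul, nsmul_eq_mul, mul_one, cast_val_R4]

lemma fst_sum {ι : Type*} (s : Finset ι) (g : ι → G γ δ) :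
    (∑ j ∈ s, g j).1 = ∑ j ∈ s, (g j).1 :=
  map_sum (AddMonoidHom.fst _ _) _ _

lemma snd_sum {ι : Type*} (s : Finset ι) (g : ι → G γ δ) :
    (∑ j ∈ s, g j).2 = ∑ j ∈ s, (g j).2 :=
  map_sum (AddMonoidHom.snd _ _) _ _

lemma f_x (f : G γ δ ≃+ G γ δ) (x : Fin γ → R2) :
    f (x, 0) = ∑ j, ((x j).val : ℕ) • f (Pi.single j 1, 0) := by
  have hx : ((x, (0:Fin δ → R4)) : G γ δ)
      = ∑ j, ((x j).val : ℕ) • ((Pi.single j 1, 0) : G γ δ) := by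
    refine Prod.ext ?_ ?_
    · rw [fst_sum]
      simp only [Prod.smul_fst]
      conv_lhs => rw [← Finset.univ_sum_single x]
      exact Finset.sum_congr rfl fun j _ => single_eq_nsmul2 j (x j)
    · rw [snd_sum]
      simp
  rw [hx, map_sum]
  simp only [map_nsmul]

lemma f_y (f : G γ δ ≃+ G γ δ) (y : Fin δ → R4) :
    f (0, y) = ∑ j, ((y j).val : ℕ) • f (0, Pi.single j 1) := by
  have hy : ((0, y) : G γ δ)
      = ∑ j, ((y j).val : ℕ) • ((0, Pi.single j 1) : G γ δ) := by
    refine Prod.ext ?_ ?_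
    · rw [fst_sum]
      simp
    · rw [snd_sum]
      simp only [Prod.smul_snd]
      conv_lhs => rw [← Finset.univ_sum_single y]
      exact Finset.sum_congr rfl fun j _ => single_eq_nsmul4 j (y j)
  rw [hy, map_sum]
  simp only [map_nsmul]

def mA (f : G γ δ ≃+ G γ δ) : M2 γ γ := fun i j => (f (Pi.single j 1, 0)).1 i
def mC (f : G γ δ ≃+ G γ δ) : M2 δ γ := fun i j => half ((f (Pi.single j 1, 0)).2 i)
def mB (f : G γ δ ≃+ G γ δ) : M2 γ δ := fun i j => (f (0, Pi.single j 1)).1 i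
def mD (f : G γ δ ≃+ G γ δ) : M4 δ := fun i j => (f (0, Pi.single j 1)).2 i

lemma tor (f : G γ δ ≃+ G γ δ) (x : Fin γ → R2) (i : Fin δ) :
    2 * ((f (x, 0)).2 i) = 0 := by
  have h0 : ((x, (0:Fin δ → R4)) : G γ δ) + (x, 0) = 0 := by
    refine Prod.ext ?_ ?_
    · funext k
      exact add_self_R2 (x k)
    · simp
  have h1 : f (x, (0:Fin δ → R4)) + f (x, 0) = 0 := by
    rw [← map_add, h0, map_zero]
  have h2 := congrFun (congrArg Prod.snd h1) i
  rw [two_mul]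
  simpa using h2

lemma hfx (f : G γ δ ≃+ G γ δ) (x : Fin γ → R2) :
    f (x, 0) = (mA f *ᵥ x, fun i => ι ((mC f *ᵥ x) i)) := by
  rw [f_x]
  refine Prod.ext ?_ ?_
  · rw [fst_sum]
    funext i
    rw [Finset.sum_apply]
    have step : ∀ j : Fin γ, ((((x j).val : ℕ) • f (Pi.single j 1, 0)).1) i
        = mA f i j * x j := by
      intro j
      rw [Prod.smul_fst, Pi.smul_apply, nsmul_eq_mul, val_mul_R2]
      rfl
    rw [Finset.sum_congr rfl fun j _ => step j]
    simp [Matrix.mulVec, dotProduct]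
  · rw [snd_sum]
    funext i
    rw [Finset.sum_apply]
    have step : ∀ j : Fin γ, ((((x j).val : ℕ) • f (Pi.single j 1, 0)).2) i
        = ι (mC f i j * x j) := by
      intro j
      rw [Prod.smul_snd, Pi.smul_apply, nsmul_eq_mul]
      exact val_smul_tor _ _ (tor f _ i)
    rw [Finset.sum_congr rfl fun j _ => step j, ← map_sum]
    congr 1

lemma hfy (f : G γ δ ≃+ G γ δ) (y : Fin δ → R4) :
    f (0, y) = (mB f *ᵥ (fun j => π (y j)), mD f *ᵥ y) := by
  rw [f_y]
  refine Prod.ext ?_ ?_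
  · rw [fst_sum]
    funext i
    rw [Finset.sum_apply]
    have step : ∀ j : Fin δ, ((((y j).val : ℕ) • f (0, Pi.single j 1)).1) i
        = mB f i j * π (y j) := by
      intro j
      rw [Prod.smul_fst, Pi.smul_apply, nsmul_eq_mul, val_mul_R4R2]
      rfl
    rw [Finset.sum_congr rfl fun j _ => step j]
    simp [Matrix.mulVec, dotProduct]
  · rw [snd_sum]
    funext i
    rw [Finset.sum_apply]
    have step : ∀ j : Fin δ, ((((y j).val : ℕ) • f (0, Pi.single j 1)).2) i
        = mD f i j * y j := by
      intro j
      rw [Prod.smul_snd, Pi.smul_apply, nsmul_eq_mul, val_mul_R4]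
      rfl
    rw [Finset.sum_congr rfl fun j _ => step j]
    simp [Matrix.mulVec, dotProduct]

lemma apply_eq (f : G γ δ ≃+ G γ δ) (p : G γ δ) :
    f p = fwd (mA f) (mB f) (mC f) (mD f) p := by
  obtain ⟨x, y⟩ := p
  have hsplit : ((x, y) : G γ δ) = (x, 0) + (0, y) := by simp
  calc f (x, y) = f ((x, 0) + (0, y)) := by rw [← hsplit]
    _ = (mA f *ᵥ x, fun i => ι ((mC f *ᵥ x) i)) + (mB f *ᵥ (fun j => π (y j)), mD f *ᵥ y) := by
        rw [map_add, hfx, hfy]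
    _ = fwd (mA f) (mB f) (mC f) (mD f) (x, y) := rfl

lemma mulVec_iota (D : M4 δ) (z : Fin δ → R2) :
    D *ᵥ (fun j => ι (z j)) = fun i => ι ((D.map π *ᵥ z) i) := by
  funext i
  calc (D *ᵥ fun j => ι (z j)) i = ∑ j, D i j * ι (z j) := by
        simp [Matrix.mulVec, dotProduct]
    _ = ∑ j, ι (π (D i j) * z j) := Finset.sum_congr rfl fun j _ => mul_ι _ _
    _ = ι (∑ j, π (D i j) * z j) := (map_sum ι _ _).symm
    _ = ι ((D.map π *ᵥ z) i) := by simp [Matrix.mulVec, dotProduct, Matrix.map_apply]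

lemma isUnit_mDbar (f : G γ δ ≃+ G γ δ) : IsUnit ((mD f).map π) := by
  rw [← Matrix.mulVec_injective_iff_isUnit]
  have key : Function.Injective ((mD f).map π).mulVecLin := by
    rw [injective_iff_map_eq_zero]
    intro z hz
    have hz' : (mD f).map π *ᵥ z = 0 := by simpa using hz
    have h0 : f (0, fun j => ι (z j)) = 0 := by
      rw [apply_eq]
      refine Prod.ext ?_ ?_
      · show mA f *ᵥ 0 + mB f *ᵥ (fun j => π (ι (z j))) = 0
        have e2 : (fun j => π (ι (z j))) = (0 : Fin δ → R2) := by funext j; simp [π_ι]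
        rw [e2]; simp
      · show (fun i => ι ((mC f *ᵥ 0) i)) + mD f *ᵥ (fun j => ι (z j)) = 0
        rw [mulVec_iota, hz']
        funext i; simp
    have hp : ((0, fun j => ι (z j)) : G γ δ) = 0 := f.injective (by rw [h0, map_zero])
    funext j
    exact ι_eq_zero _ (congrFun (congrArg Prod.snd hp) j)
  have heq : ⇑((mD f).map π).mulVecLin = ((mD f).map π).mulVec := by
    funext v; simp [Matrix.mulVecLin_apply]
  rw [← heq]
  exact key

lemma isUnit_mD (f : G γ δ ≃+ G γ δ) : IsUnit (mD f) := by
  rw [Matrix.isUnit_iff_isUnit_det]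
  apply unit_of_π
  rw [RingHom.map_det]
  exact (Matrix.isUnit_iff_isUnit_det _).mp (isUnit_mDbar f)

lemma isUnit_mA (f : G γ δ ≃+ G γ δ) : IsUnit (mA f) := by
  rw [← Matrix.mulVec_injective_iff_isUnit]
  have key : Function.Injective (mA f).mulVecLin := by
    rw [injective_iff_map_eq_zero]
    intro z hz
    have hz' : mA f *ᵥ z = 0 := by simpa using hz
    have hDb := isUnit_mDbar f
    set w := ((mD f).map π)⁻¹ *ᵥ (mC f *ᵥ z) with hwdef
    have hw : (mD f).map π *ᵥ w = mC f *ᵥ z := by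
      rw [hwdef, Matrix.mulVec_mulVec,
        Matrix.mul_nonsing_inv _ ((Matrix.isUnit_iff_isUnit_det _).mp hDb), Matrix.one_mulVec]
    have hcmp : f (z, 0) = f (0, fun j => ι (w j)) := by
      rw [apply_eq, apply_eq]
      refine Prod.ext ?_ ?_
      · show mA f *ᵥ z + mB f *ᵥ (fun j => π ((0 : Fin δ → R4) j))
            = mA f *ᵥ 0 + mB f *ᵥ (fun j => π (ι (w j)))
        have e1 : (fun j => π ((0 : Fin δ → R4) j)) = (0 : Fin δ → R2) := by funext j; simp
        have e2 : (fun j => π (ι (w j))) = (0 : Fin δ → R2) := by funext j; simp [π_ι]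
        rw [hz', e1, e2]; simp
      · show (fun i => ι ((mC f *ᵥ z) i)) + mD f *ᵥ (0 : Fin δ → R4)
            = (fun i => ι ((mC f *ᵥ (0 : Fin γ → R2)) i)) + mD f *ᵥ (fun j => ι (w j))
        rw [mulVec_iota, hw]
        funext i; simp
    have hp := f.injective hcmp
    exact congrArg Prod.fst hp
  have heq : ⇑(mA f).mulVecLin = (mA f).mulVec := by
    funext v; simp [Matrix.mulVecLin_apply]
  rw [← heq]
  exact key

noncomputable def toAut (A : M2 γ γ) (B : M2 γ δ) (C : M2 δ γ) (D : M4 δ)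
    (hA : IsUnit A) (hD : IsUnit D) : G γ δ ≃+ G γ δ :=
  AddEquiv.ofBijective (fwdHom A B C D)
    (Finite.injective_iff_bijective.mp (fwd_injective hA hD))

lemma toAut_apply (A : M2 γ γ) (B : M2 γ δ) (C : M2 δ γ) (D : M4 δ)
    (hA : IsUnit A) (hD : IsUnit D) (p : G γ δ) :
    toAut A B C D hA hD p = fwd A B C D p := rfl

lemma pi_single_π (j : Fin δ) :
    (fun k : Fin δ => π ((Pi.single j (1:R4) : Fin δ → R4) k)) = Pi.single j (1:R2) := by
  funext k
  rcases eq_or_ne k j with rfl | hk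
  · simp
  · simp [Pi.single_eq_of_ne hk]

lemma mA_toAut (A : M2 γ γ) (B : M2 γ δ) (C : M2 δ γ) (D : M4 δ) (hA : IsUnit A)
    (hD : IsUnit D) : mA (toAut A B C D hA hD) = A := by
  funext i j
  show (fwd A B C D (Pi.single j 1, 0)).1 i = A i j
  show (A *ᵥ Pi.single j 1 + B *ᵥ (fun k => π ((0 : Fin δ → R4) k))) i = A i j
  have e1 : (fun k => π ((0 : Fin δ → R4) k)) = (0 : Fin δ → R2) := by funext k; simp
  rw [e1]
  simp [Matrix.mulVec_single]

lemma mC_toAut (A : M2 γ γ) (B : M2 γ δ) (C : M2 δ γ) (D : M4 δ) (hA : IsUnit A)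
    (hD : IsUnit D) : mC (toAut A B C D hA hD) = C := by
  funext i j
  show half ((fwd A B C D (Pi.single j 1, 0)).2 i) = C i j
  show half (((fun i => ι ((C *ᵥ Pi.single j 1) i)) + D *ᵥ (0 : Fin δ → R4)) i) = C i j
  rw [Matrix.mulVec_zero]
  simp [Matrix.mulVec_single, half_ι]

set_option maxHeartbeats 1000000 in
lemma mB_toAut (A : M2 γ γ) (B : M2 γ δ) (C : M2 δ γ) (D : M4 δ) (hA : IsUnit A)
    (hD : IsUnit D) : mB (toAut A B C D hA hD) = B := by
  funext i j
  show (fwd A B C D (0, Pi.single j 1)).1 i = B i j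
  show (A *ᵥ (0 : Fin γ → R2) + B *ᵥ (fun k => π ((Pi.single j (1:R4) : Fin δ → R4) k))) i = B i j
  rw [pi_single_π]
  simp [Matrix.mulVec_single]

set_option maxHeartbeats 1000000 in
lemma mD_toAut (A : M2 γ γ) (B : M2 γ δ) (C : M2 δ γ) (D : M4 δ) (hA : IsUnit A)
    (hD : IsUnit D) : mD (toAut A B C D hA hD) = D := by
  funext i j
  show (fwd A B C D (0, Pi.single j 1)).2 i = D i j
  show (((fun i => ι ((C *ᵥ (0 : Fin γ → R2)) i)) + D *ᵥ Pi.single j 1)) i = D i j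
  simp [Matrix.mulVec_single]

abbrev S (γ δ : ℕ) := (M2 γ γ)ˣ × (M4 δ)ˣ × M2 γ δ × M2 δ γ

noncomputable def autEquiv (γ δ : ℕ) : (G γ δ ≃+ G γ δ) ≃ S γ δ where
  toFun f := ((isUnit_mA f).unit, (isUnit_mD f).unit, mB f, mC f)
  invFun s := toAut s.1.val s.2.2.1 s.2.2.2 s.2.1.val s.1.isUnit s.2.1.isUnit
  left_inv f := by
    apply AddEquiv.ext
    intro p
    rw [toAut_apply]
    have h1 : ((isUnit_mA f).unit : M2 γ γ) = mA f := IsUnit.unit_spec _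
    have h2 : ((isUnit_mD f).unit : M4 δ) = mD f := IsUnit.unit_spec _
    rw [h1, h2]
    exact (apply_eq f p).symm
  right_inv s := by
    obtain ⟨U, V, B, C⟩ := s
    refine Prod.ext ?_ (Prod.ext ?_ (Prod.ext ?_ ?_))
    · exact Units.ext (by simpa using mA_toAut U.val B C V.val U.isUnit V.isUnit)
    · exact Units.ext (by simpa using mD_toAut U.val B C V.val U.isUnit V.isUnit)
    · simpa using mB_toAut U.val B C V.val U.isUnit V.isUnit
    · simpa using mC_toAut U.val B C V.val U.isUnit V.isUnit

lemma isUnit_map_π {n : ℕ} (M : M4 n) : IsUnit M ↔ IsUnit (M.map π) := by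
  have hd : (M.map ⇑π).det = π M.det := by
    rw [← RingHom.mapMatrix_apply, ← RingHom.map_det]
  rw [Matrix.isUnit_iff_isUnit_det _, Matrix.isUnit_iff_isUnit_det _, hd]
  constructor
  · exact fun h => h.map π
  · exact unit_of_π _

def σfun (a b : R2) : R4 := (a.val : R4) + 2 * (b.val : R4)

lemma π_σ (a b : R2) : π (σfun a b) = a := (σ_spec a b).1
lemma half_σ (a b : R2) : half (σfun a b) = b := (σ_spec a b).2
lemma σ_πhalf (v : R4) : σfun (π v) (half v) = v := σ_π_half v

def σmat {n : ℕ} (pr : (M2 n n)ˣ × M2 n n) : M4 n :=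
  Matrix.of fun i j => σfun (pr.1.val i j) (pr.2 i j)

lemma σmat_map {n : ℕ} (pr : (M2 n n)ˣ × M2 n n) : (σmat pr).map π = pr.1.val := by
  funext i j
  exact π_σ _ _

lemma isUnit_σmat {n : ℕ} (pr : (M2 n n)ˣ × M2 n n) : IsUnit (σmat pr) :=
  (isUnit_map_π _).mpr (by rw [σmat_map]; exact pr.1.isUnit)

noncomputable def unitsM4Equiv (n : ℕ) : (M4 n)ˣ ≃ (M2 n n)ˣ × M2 n n where
  toFun u := (((isUnit_map_π u.val).mp u.isUnit).unit, Matrix.of fun i j => half (u.val i j))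
  invFun pr := (isUnit_σmat pr).unit
  left_inv u := by
    apply Units.ext
    rw [IsUnit.unit_spec]
    funext i j
    show σfun ((((isUnit_map_π u.val).mp u.isUnit).unit : M2 n n) i j) (half (u.val i j))
        = u.val i j
    rw [IsUnit.unit_spec]
    exact σ_πhalf _
  right_inv pr := by
    refine Prod.ext (Units.ext ?_) ?_
    · show (((isUnit_map_π (((isUnit_σmat pr).unit : (M4 n)ˣ) : M4 n)).mp (Units.isUnit _)).unit : M2 n n)
          = pr.1.val
      rw [IsUnit.unit_spec, IsUnit.unit_spec]
      exact σmat_map pr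
    · show Matrix.of (fun i j => half ((((isUnit_σmat pr).unit : (M4 n)ˣ) : M4 n) i j)) = pr.2
      rw [IsUnit.unit_spec]
      funext i j
      exact half_σ _ _

lemma card_M2 (a b : ℕ) : Nat.card (M2 a b) = 2 ^ (a * b) := by
  have h1 : Nat.card (M2 a b) = Nat.card (Fin a → Fin b → R2) := rfl
  rw [h1, Nat.card_fun, Nat.card_fun, Nat.card_eq_fintype_card (α := R2), ZMod.card,
    Nat.card_eq_fintype_card (α := Fin a), Nat.card_eq_fintype_card (α := Fin b),
    Fintype.card_fin, Fintype.card_fin, ← pow_mul, mul_comm b a]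

lemma card_units_M4 (n : ℕ) : Nat.card (M4 n)ˣ = Nat.card (M2 n n)ˣ * 2 ^ (n * n) := by
  rw [Nat.card_congr (unitsM4Equiv n), Nat.card_prod, card_M2]

lemma card_GL2 (n : ℕ) :
    Nat.card (M2 n n)ˣ = 2 ^ (n * (n - 1) / 2) * ∏ j ∈ Finset.range n, (2 ^ (j + 1) - 1) := by
  have h : Nat.card (M2 n n)ˣ
      = ∏ i : Fin n, (Fintype.card R2 ^ n - Fintype.card R2 ^ (i : ℕ)) :=
    Matrix.card_GL_field (𝔽 := R2) n
  rw [h]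
  have hc : Fintype.card R2 = 2 := ZMod.card 2
  rw [hc, Fin.prod_univ_eq_prod_range (fun i => 2 ^ n - 2 ^ i) n]
  have key : ∀ i ∈ Finset.range n, 2 ^ n - 2 ^ i = 2 ^ i * (2 ^ (n - i) - 1) := by
    intro i hi
    have hin : i ≤ n := le_of_lt (Finset.mem_range.mp hi)
    rw [Nat.mul_sub, mul_one, ← pow_add, Nat.add_sub_cancel' hin]
  rw [Finset.prod_congr rfl key, Finset.prod_mul_distrib, Finset.prod_pow_eq_pow_sum,
    Finset.sum_range_id]
  congr 1
  rw [← Finset.prod_range_reflect (fun j => 2 ^ (j + 1) - 1) n]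
  apply Finset.prod_congr rfl
  intro i hi
  have hin : n - 1 - i + 1 = n - i := by
    have := Finset.mem_range.mp hi; omega
  rw [hin]

end Stmt18Aux

theorem stmt18 (γ δ : ℕ) :
    Nat.card (((Fin γ → ZMod 2) × (Fin δ → ZMod 4)) ≃+
              ((Fin γ → ZMod 2) × (Fin δ → ZMod 4)))
      = 2 ^ (δ ^ 2 + γ * δ + δ * (δ - 1) / 2) * (∏ j ∈ Finset.range δ, (2 ^ (j + 1) - 1)) *
        2 ^ (δ * γ + γ * (γ - 1) / 2) * (∏ i ∈ Finset.range γ, (2 ^ (i + 1) - 1)) := by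
  refine Eq.trans (Nat.card_congr (Stmt18Aux.autEquiv γ δ)) ?_
  rw [Nat.card_prod, Nat.card_prod, Nat.card_prod,
    Stmt18Aux.card_GL2, Stmt18Aux.card_units_M4, Stmt18Aux.card_GL2,
    Stmt18Aux.card_M2, Stmt18Aux.card_M2]
  ring
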